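/- (Proposition 1) Let κ ≥ 1 and let π be a probability measure on 𝒳×{−1,1}. Then π satisfies MA(κ) for some constant c₀ > 0 if and only if π satisfies MAH(κ) for some constant c > 0. -/

import Mathlib

open MeasureTheory
open scoped ENNReal NNReal

noncomputable section

namespace AggClass

variable {X : Type*} [MeasurableSpace X]

/-- The sign function, with the convention `sgn 0 = 1`. -/
def sgn (t : ℝ) : ℝ := if 0 ≤ t then 1 else -1

/-- The Bayes rule `f*(x) = sign (2 η x - 1)`. -/
def bayes (η : X → ℝ) : X → ℝ := fun x => sgn (2 * η x - 1)

/-- The hinge risk `A(f) = E[max (1 - Y f(X)) 0]`, as an extended nonnegative real. -/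
def hingeRiskE (π : Measure (X × ℝ)) (f : X → ℝ) : ℝ≥0∞ :=
  ∫⁻ p, ENNReal.ofReal (max (1 - p.2 * f p.1) 0) ∂π

/-- The optimal hinge risk `A* = inf {A(f) : f : X → ℝ measurable}`. -/
def optHingeRiskE (π : Measure (X × ℝ)) : ℝ≥0∞ :=
  ⨅ (f : X → ℝ) (_ : Measurable f), hingeRiskE π f

/-- The hinge risk, real-valued. -/
def hingeRisk (π : Measure (X × ℝ)) (f : X → ℝ) : ℝ := (hingeRiskE π f).toReal

/-- The optimal hinge risk, real-valued. -/
def optHingeRisk (π : Measure (X × ℝ)) : ℝ := (optHingeRiskE π).toReal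

/-- The misclassification risk `R(f) = π (Y ≠ sign (f X))`, ℝ≥0∞-valued. -/
def misRiskE (π : Measure (X × ℝ)) (f : X → ℝ) : ℝ≥0∞ :=
  π {p : X × ℝ | p.2 ≠ sgn (f p.1)}

/-- The misclassification risk, real-valued. -/
def misRisk (π : Measure (X × ℝ)) (f : X → ℝ) : ℝ := (misRiskE π f).toReal

/-- `π` is a joint law of a pair (X,Y) on `X × {-1,1}` with regression function
`η x = π(Y = 1 ∣ X = x)`. -/
structure IsClassif (π : Measure (X × ℝ)) (η : X → ℝ) : Prop where
  labels : π {p : X × ℝ | p.2 = 1 ∨ p.2 = -1}ᶜ = 0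
  meas : Measurable η
  mem01 : ∀ x, η x ∈ Set.Icc (0 : ℝ) 1
  cond : ∀ B : Set X, MeasurableSet B →
    π (B ×ˢ ({1} : Set ℝ)) = ∫⁻ x in B, ENNReal.ofReal (η x) ∂(π.map Prod.fst)

/-- Margin assumption MA(κ) with constant c₀ : for every measurable prediction rule
`f : X → {-1,1}`, `E[|f(X) - f*(X)|] ≤ c₀ (R(f) - R*)^(1/κ)`. -/
def MA (π : Measure (X × ℝ)) (η : X → ℝ) (κ c₀ : ℝ) : Prop :=
  ∀ f : X → ℝ, Measurable f → (∀ x, f x = 1 ∨ f x = -1) →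
    ∫ x, |f x - bayes η x| ∂(π.map Prod.fst)
      ≤ c₀ * (misRisk π f - misRisk π (bayes η)) ^ (1 / κ)

/-- Margin assumption for the hinge risk MAH(κ) with constant c : for every measurable
`f : X → [-1,1]`, `E[|f(X) - f*(X)|] ≤ c (A(f) - A*)^(1/κ)`. -/
def MAH (π : Measure (X × ℝ)) (η : X → ℝ) (κ c : ℝ) : Prop :=
  ∀ f : X → ℝ, Measurable f → (∀ x, f x ∈ Set.Icc (-1 : ℝ) 1) →
    ∫ x, |f x - bayes η x| ∂(π.map Prod.fst)
      ≤ c * (hingeRisk π f - optHingeRisk π) ^ (1 / κ)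

/-- Convex combination of f₁,…,f_M with weights w. -/
def convComb {M : ℕ} (f : Fin M → X → ℝ) (w : Fin M → ℝ) : X → ℝ :=
  fun x => ∑ j, w j * f j x

/-- The set of hinge risks of the elements of the convex hull of f₁,…,f_M. -/
def convRiskSet (π : Measure (X × ℝ)) {M : ℕ} (f : Fin M → X → ℝ) : Set ℝ :=
  {a | ∃ w : Fin M → ℝ, (∀ j, 0 ≤ w j) ∧ (∑ j, w j) = 1 ∧ a = hingeRisk π (convComb f w)}

/-- The law of an i.i.d. sample of size n from π. -/
def sample {α : Type*} [MeasurableSpace α] (π : Measure α) [SigmaFinite π] (n : ℕ) :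
    Measure (Fin n → α) :=
  Measure.pi fun _ => π

/-- The empirical hinge risk on the sample D. -/
def empHinge {n : ℕ} (D : Fin n → X × ℝ) (f : X → ℝ) : ℝ :=
  (n : ℝ)⁻¹ * ∑ i, max (1 - (D i).2 * f (D i).1) 0

/-- The empirical misclassification risk on the sample D. -/
def empMis {n : ℕ} (D : Fin n → X × ℝ) (f : X → ℝ) : ℝ :=
  (n : ℝ)⁻¹ * ∑ i, if (D i).2 ≠ f (D i).1 then (1 : ℝ) else 0

/-- The set of indices minimizing the empirical hinge risk. -/
def ermSet {n M : ℕ} (f : Fin M → X → ℝ) (D : Fin n → X × ℝ) : Finset (Fin M) :=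
  Finset.univ.filter fun j => ∀ k, empHinge D (f j) ≤ empHinge D (f k)

/-- `tf` is an empirical risk minimization (ERM) aggregate for the hinge loss. -/
def IsERM {n M : ℕ} (f : Fin M → X → ℝ) (tf : (Fin n → X × ℝ) → X → ℝ) : Prop :=
  ∀ D, ∃ j ∈ ermSet f D, tf D = f j

/-- `tf` is the averaged ERM (AERM) aggregate for the hinge loss. -/
def IsAERM {n M : ℕ} (f : Fin M → X → ℝ) (tf : (Fin n → X × ℝ) → X → ℝ) : Prop :=
  ∀ D, tf D = fun x => ((ermSet f D).card : ℝ)⁻¹ * ∑ j ∈ ermSet f D, f j x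

/-- The exponential weights for the hinge loss. -/
def aewWeight {n M : ℕ} (f : Fin M → X → ℝ) (D : Fin n → X × ℝ) (j : Fin M) : ℝ :=
  Real.exp (-(n : ℝ) * empHinge D (f j)) / ∑ k, Real.exp (-(n : ℝ) * empHinge D (f k))

/-- `tf` is the aggregation-with-exponential-weights (AEW) aggregate for the hinge loss. -/
def IsAEW {n M : ℕ} (f : Fin M → X → ℝ) (tf : (Fin n → X × ℝ) → X → ℝ) : Prop :=
  ∀ D, tf D = fun x => ∑ j, aewWeight f D j * f j x

/-- Empirical hinge risk on the first k observations of the sample D. -/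
def empHingeK {n : ℕ} (D : Fin n → X × ℝ) (k : ℕ) (f : X → ℝ) : ℝ :=
  (k : ℝ)⁻¹ * ∑ i ∈ Finset.univ.filter (fun i : Fin n => (i : ℕ) < k),
    max (1 - (D i).2 * f (D i).1) 0

/-- The cumulative exponential weights for the hinge loss. -/
def caewWeight {n M : ℕ} (f : Fin M → X → ℝ) (D : Fin n → X × ℝ) (j : Fin M) : ℝ :=
  (n : ℝ)⁻¹ * ∑ k ∈ Finset.Icc 1 n,
    Real.exp (-(k : ℝ) * empHingeK D k (f j)) /
      ∑ l, Real.exp (-(k : ℝ) * empHingeK D k (f l))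

section Prop1Aux

variable {π : Measure (X × ℝ)} {η : X → ℝ}

lemma sgn_pm (t : ℝ) : sgn t = 1 ∨ sgn t = -1 := by
  unfold sgn; split <;> simp

lemma measurable_sgn_comp {f : X → ℝ} (hf : Measurable f) :
    Measurable fun x => sgn (f x) := by
  unfold sgn
  exact Measurable.ite (measurableSet_le measurable_const hf) measurable_const measurable_const

lemma measurable_bayes (hη : Measurable η) : Measurable (bayes η) := by
  unfold bayes
  exact measurable_sgn_comp (by fun_prop)

lemma bayes_pm (η : X → ℝ) (x : X) : bayes η x = 1 ∨ bayes η x = -1 := sgn_pm _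

lemma integrable_bdd {μ : Measure X} [IsFiniteMeasure μ] {g : X → ℝ} (hg : Measurable g)
    {C : ℝ} (hC : ∀ x, |g x| ≤ C) : Integrable g μ :=
  (integrable_const C).mono' hg.aestronglyMeasurable
    (Filter.Eventually.of_forall fun x => by simpa [Real.norm_eq_abs] using hC x)

lemma map_fst_prob [IsProbabilityMeasure π] : IsProbabilityMeasure (π.map Prod.fst) :=
  Measure.isProbabilityMeasure_map measurable_fst.aemeasurable

lemma restrict_eq_map {w : X → ℝ} (y : ℝ)
    (hy : ∀ A : Set X, MeasurableSet A → π (A ×ˢ ({y} : Set ℝ)) =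
      ∫⁻ x in A, ENNReal.ofReal (w x) ∂(π.map Prod.fst)) :
    π.restrict (Set.univ ×ˢ ({y} : Set ℝ)) =
      Measure.map (fun x => (x, y))
        ((π.map Prod.fst).withDensity fun x => ENNReal.ofReal (w x)) := by
  have hmk : Measurable fun x : X => (x, y) := measurable_id.prodMk measurable_const
  ext s hs
  rw [Measure.restrict_apply hs, Measure.map_apply hmk hs, withDensity_apply _ (hmk hs)]
  have hset : s ∩ (Set.univ ×ˢ ({y} : Set ℝ)) =
      ((fun x : X => (x, y)) ⁻¹' s) ×ˢ ({y} : Set ℝ) := by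
    ext ⟨a, b⟩
    simp only [Set.mem_inter_iff, Set.mem_prod, Set.mem_preimage, Set.mem_singleton_iff,
      Set.mem_univ, true_and]
    constructor
    · rintro ⟨h1, rfl⟩; exact ⟨h1, rfl⟩
    · rintro ⟨h1, rfl⟩; exact ⟨h1, rfl⟩
  rw [hset, hy _ (hmk hs)]

lemma setLintegral_label {w : X → ℝ} (hw : Measurable w) (y : ℝ)
    (hy : ∀ A : Set X, MeasurableSet A → π (A ×ˢ ({y} : Set ℝ)) =
      ∫⁻ x in A, ENNReal.ofReal (w x) ∂(π.map Prod.fst))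
    {h : X × ℝ → ℝ≥0∞} (hh : Measurable h) :
    ∫⁻ p in Set.univ ×ˢ ({y} : Set ℝ), h p ∂π
      = ∫⁻ x, ENNReal.ofReal (w x) * h (x, y) ∂(π.map Prod.fst) := by
  have hmk : Measurable fun x : X => (x, y) := measurable_id.prodMk measurable_const
  rw [show (∫⁻ p in Set.univ ×ˢ ({y} : Set ℝ), h p ∂π)
      = ∫⁻ p, h p ∂(π.restrict (Set.univ ×ˢ ({y} : Set ℝ))) from rfl,
    restrict_eq_map y hy, lintegral_map hh hmk,
    lintegral_withDensity_eq_lintegral_mul _ hw.ennreal_ofReal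
      (g := fun a => h (a, y)) (hh.comp hmk)]
  rfl

lemma prod_neg (hπ : IsClassif π η) [IsProbabilityMeasure π] :
    ∀ A : Set X, MeasurableSet A → π (A ×ˢ ({-1} : Set ℝ)) =
      ∫⁻ x in A, ENNReal.ofReal (1 - η x) ∂(π.map Prod.fst) := by
  intro A hA
  have hμA : (π.map Prod.fst) A = π (A ×ˢ (Set.univ : Set ℝ)) := by
    rw [Measure.map_apply measurable_fst hA]
    congr 1
    ext p; simp [Set.mem_prod]
  have hrest : π (A ×ˢ (({1, -1} : Set ℝ)ᶜ)) = 0 := by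
    refine measure_mono_null ?_ hπ.labels
    rintro ⟨a, b⟩ ⟨_, hb⟩
    simp only [Set.mem_compl_iff, Set.mem_insert_iff, Set.mem_singleton_iff] at hb ⊢
    tauto
  have hsplit : π (A ×ˢ (Set.univ : Set ℝ)) =
      π (A ×ˢ ({1} : Set ℝ)) + π (A ×ˢ ({-1} : Set ℝ)) := by
    have huniv : (Set.univ : Set ℝ) = {1} ∪ ({-1} ∪ ({1, -1} : Set ℝ)ᶜ) := by
      ext b; by_cases hb1 : b = 1 <;> by_cases hb2 : b = -1 <;> simp [hb1, hb2]
    have hd1 : Disjoint (A ×ˢ ({1} : Set ℝ)) (A ×ˢ (({-1} : Set ℝ) ∪ ({1, -1} : Set ℝ)ᶜ)) := by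
      rw [Set.disjoint_left]
      rintro ⟨a, b⟩ ⟨_, hb⟩ ⟨_, hb'⟩
      simp only [Set.mem_singleton_iff] at hb
      rcases hb' with h | h
      · simp only [Set.mem_singleton_iff] at h
        rw [hb] at h; norm_num at h
      · exact h (Or.inl hb)
    have hd2 : Disjoint (A ×ˢ ({-1} : Set ℝ)) (A ×ˢ (({1, -1} : Set ℝ)ᶜ)) := by
      rw [Set.disjoint_left]
      rintro ⟨a, b⟩ ⟨_, hb⟩ ⟨_, hb'⟩
      simp only [Set.mem_singleton_iff] at hb
      exact hb' (Or.inr hb)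
    have hm1 : MeasurableSet (A ×ˢ (({-1} : Set ℝ) ∪ ({1, -1} : Set ℝ)ᶜ)) :=
      hA.prod ((measurableSet_singleton _).union
        (((measurableSet_singleton (1:ℝ)).union (measurableSet_singleton (-1:ℝ))).compl))
    have hm2 : MeasurableSet (A ×ˢ (({1, -1} : Set ℝ)ᶜ)) :=
      hA.prod (((measurableSet_singleton (1:ℝ)).union (measurableSet_singleton (-1:ℝ))).compl)
    rw [huniv, Set.prod_union, measure_union hd1 hm1, Set.prod_union,
      measure_union hd2 hm2, hrest, add_zero]
  have hηint : ∫⁻ x in A, ENNReal.ofReal (1 - η x) ∂(π.map Prod.fst)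
      + ∫⁻ x in A, ENNReal.ofReal (η x) ∂(π.map Prod.fst) = (π.map Prod.fst) A := by
    rw [← lintegral_add_right _ hπ.meas.ennreal_ofReal]
    rw [← setLIntegral_one A]
    refine setLIntegral_congr_fun_ae hA (Filter.Eventually.of_forall fun x _ => ?_)
    rcases hπ.mem01 x with ⟨h0, h1⟩
    rw [← ENNReal.ofReal_add (by linarith) h0]
    norm_num
  have hfin : ∫⁻ x in A, ENNReal.ofReal (η x) ∂(π.map Prod.fst) ≠ ⊤ := by
    have hle : ∫⁻ x in A, ENNReal.ofReal (η x) ∂(π.map Prod.fst)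
        ≤ ∫⁻ x in A, 1 ∂(π.map Prod.fst) := by
      refine setLIntegral_mono measurable_const fun x _ => ?_
      exact ENNReal.ofReal_le_one.2 (hπ.mem01 x).2
    rw [setLIntegral_one] at hle
    exact ne_top_of_le_ne_top (measure_ne_top _ _) hle
  have k1 : (∫⁻ x in A, ENNReal.ofReal (η x) ∂(π.map Prod.fst)) + π (A ×ˢ ({-1} : Set ℝ))
      = (π.map Prod.fst) A := by
    rw [← hπ.cond A hA, hμA, hsplit]
  have k2 : (∫⁻ x in A, ENNReal.ofReal (η x) ∂(π.map Prod.fst))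
      + ∫⁻ x in A, ENNReal.ofReal (1 - η x) ∂(π.map Prod.fst) = (π.map Prod.fst) A := by
    rw [add_comm]; exact hηint
  exact (ENNReal.add_right_inj hfin).1 (k1.trans k2.symm)

lemma lintegral_split (hπ : IsClassif π η) [IsProbabilityMeasure π]
    {h : X × ℝ → ℝ≥0∞} (hh : Measurable h) :
    ∫⁻ p, h p ∂π
      = ∫⁻ x, ENNReal.ofReal (η x) * h (x, 1) ∂(π.map Prod.fst)
        + ∫⁻ x, ENNReal.ofReal (1 - η x) * h (x, -1) ∂(π.map Prod.fst) := by
  set S1 : Set (X × ℝ) := Set.univ ×ˢ ({1} : Set ℝ) with hS1def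
  set S2 : Set (X × ℝ) := Set.univ ×ˢ ({-1} : Set ℝ) with hS2def
  have hS1 : MeasurableSet S1 := MeasurableSet.univ.prod (measurableSet_singleton _)
  have hS2 : MeasurableSet S2 := MeasurableSet.univ.prod (measurableSet_singleton _)
  have hdisj : Disjoint S1 S2 := by
    rw [Set.disjoint_left]
    rintro ⟨a, b⟩ ⟨_, hb⟩ ⟨_, hb'⟩
    simp only [Set.mem_singleton_iff] at hb hb'
    rw [hb] at hb'; norm_num at hb'
  have hcompl : π ((S1 ∪ S2)ᶜ) = 0 := by
    have hset : (S1 ∪ S2)ᶜ = {p : X × ℝ | p.2 = 1 ∨ p.2 = -1}ᶜ := by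
      ext ⟨a, b⟩
      simp only [hS1def, hS2def, Set.mem_compl_iff, Set.mem_union, Set.mem_prod,
        Set.mem_univ, true_and, Set.mem_singleton_iff, Set.mem_setOf_eq]
    rw [hset]; exact hπ.labels
  calc ∫⁻ p, h p ∂π
      = ∫⁻ p in S1 ∪ S2, h p ∂π + ∫⁻ p in (S1 ∪ S2)ᶜ, h p ∂π :=
        (lintegral_add_compl h (hS1.union hS2)).symm
    _ = ∫⁻ p in S1, h p ∂π + ∫⁻ p in S2, h p ∂π := by
        rw [lintegral_union hS2 hdisj, setLIntegral_measure_zero _ _ hcompl, add_zero]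
    _ = _ := by
        rw [setLintegral_label hπ.meas 1 hπ.cond hh,
          setLintegral_label (w := fun x => 1 - η x) (measurable_const.sub hπ.meas) (-1) (prod_neg hπ) hh]

lemma G_eq (ηx v : ℝ) (hv : -1 ≤ v) (hv' : v ≤ 1) :
    ηx * max (1 - v) 0 + (1 - ηx) * max (1 + v) 0 = 1 - v * (2 * ηx - 1) := by
  rw [max_eq_left (by linarith), max_eq_left (by linarith)]; ring

lemma G_ge (ηx v : ℝ) (h0 : 0 ≤ ηx) (h1 : ηx ≤ 1) :
    1 - |2 * ηx - 1| ≤ ηx * max (1 - v) 0 + (1 - ηx) * max (1 + v) 0 := by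
  have hM1 : (1 : ℝ) - v ≤ max (1 - v) 0 := le_max_left _ _
  have hM1' : (0 : ℝ) ≤ max (1 - v) 0 := le_max_right _ _
  have hM2 : (1 : ℝ) + v ≤ max (1 + v) 0 := le_max_left _ _
  have hM2' : (0 : ℝ) ≤ max (1 + v) 0 := le_max_right _ _
  rcases abs_cases (2 * ηx - 1) with ⟨he, hs⟩ | ⟨he, hs⟩ <;> rw [he] <;>
    rcases le_total v (-1) with hv | hv <;> rcases le_total 1 v with hv' | hv'
  · nlinarith
  · nlinarith [mul_nonneg h0 hM1']
  · nlinarith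
  · nlinarith [mul_nonneg (by linarith : (0:ℝ) ≤ 1 - v) (by linarith : (0:ℝ) ≤ 2 * ηx - 1)]
  · nlinarith
  · nlinarith [mul_nonneg (by linarith : (0:ℝ) ≤ 1 - ηx) hM2']
  · nlinarith
  · nlinarith [mul_nonneg (by linarith : (0:ℝ) ≤ 1 + v) (by linarith : (0:ℝ) ≤ 1 - 2 * ηx)]

lemma hingeRiskE_eq (hπ : IsClassif π η) [IsProbabilityMeasure π] {f : X → ℝ}
    (hf : Measurable f) :
    hingeRiskE π f = ∫⁻ x, ENNReal.ofReal
      (η x * max (1 - f x) 0 + (1 - η x) * max (1 + f x) 0) ∂(π.map Prod.fst) := by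
  have hh : Measurable fun p : X × ℝ => ENNReal.ofReal (max (1 - p.2 * f p.1) 0) :=
    ((measurable_const.sub (measurable_snd.mul (hf.comp measurable_fst))).max
      measurable_const).ennreal_ofReal
  unfold hingeRiskE
  rw [lintegral_split hπ hh]
  simp only [one_mul, neg_one_mul, sub_neg_eq_add]
  rw [← lintegral_add_left
    (f := fun x => ENNReal.ofReal (η x) * ENNReal.ofReal (max (1 - f x) 0))
    (hπ.meas.ennreal_ofReal.mul
    (((measurable_const.sub hf).max measurable_const).ennreal_ofReal))]
  refine lintegral_congr fun x => ?_
  rcases hπ.mem01 x with ⟨h0, h1⟩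
  rw [← ENNReal.ofReal_mul h0, ← ENNReal.ofReal_mul (by linarith),
    ← ENNReal.ofReal_add (mul_nonneg h0 (le_max_right _ _))
      (mul_nonneg (by linarith) (le_max_right _ _))]

lemma bayes_mul (η : X → ℝ) (x : X) : bayes η x * (2 * η x - 1) = |2 * η x - 1| := by
  unfold bayes sgn
  split <;> rename_i h
  · rw [abs_of_nonneg h]; ring
  · rw [abs_of_neg (not_le.1 h)]; ring

lemma bayes_Icc (η : X → ℝ) (x : X) : bayes η x ∈ Set.Icc (-1 : ℝ) 1 := by
  rcases bayes_pm η x with h | h <;> rw [h] <;> norm_num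

lemma hingeRiskE_bayes (hπ : IsClassif π η) [IsProbabilityMeasure π] :
    hingeRiskE π (bayes η)
      = ∫⁻ x, ENNReal.ofReal (1 - |2 * η x - 1|) ∂(π.map Prod.fst) := by
  rw [hingeRiskE_eq hπ (measurable_bayes hπ.meas)]
  refine lintegral_congr fun x => ?_
  congr 1
  rw [G_eq (η x) (bayes η x) (bayes_Icc η x).1 (bayes_Icc η x).2, bayes_mul]

lemma optHingeRiskE_eq (hπ : IsClassif π η) [IsProbabilityMeasure π] :
    optHingeRiskE π = ∫⁻ x, ENNReal.ofReal (1 - |2 * η x - 1|) ∂(π.map Prod.fst) := by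
  refine le_antisymm ?_ ?_
  · rw [← hingeRiskE_bayes hπ]
    exact iInf_le_of_le (bayes η) (iInf_le _ (measurable_bayes hπ.meas))
  · refine le_iInf fun f => le_iInf fun hf => ?_
    rw [hingeRiskE_eq hπ hf]
    refine lintegral_mono fun x => ENNReal.ofReal_le_ofReal ?_
    exact G_ge (η x) (f x) (hπ.mem01 x).1 (hπ.mem01 x).2

lemma hingeRisk_eq (hπ : IsClassif π η) [IsProbabilityMeasure π] {f : X → ℝ}
    (hf : Measurable f) (hb : ∀ x, f x ∈ Set.Icc (-1 : ℝ) 1) :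
    hingeRisk π f = ∫ x, (1 - f x * (2 * η x - 1)) ∂(π.map Prod.fst) := by
  unfold hingeRisk
  rw [hingeRiskE_eq hπ hf]
  have hpt : ∀ x, η x * max (1 - f x) 0 + (1 - η x) * max (1 + f x) 0
      = 1 - f x * (2 * η x - 1) := fun x => G_eq (η x) (f x) (hb x).1 (hb x).2
  rw [lintegral_congr fun x => by rw [hpt x]]
  refine (integral_eq_lintegral_of_nonneg_ae (Filter.Eventually.of_forall fun x => ?_)
    (measurable_const.sub (hf.mul
      ((hπ.meas.const_mul 2).sub_const 1))).aestronglyMeasurable).symm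
  rcases hb x with ⟨hl, hr⟩
  rcases hπ.mem01 x with ⟨h0, h1⟩
  show (0:ℝ) ≤ 1 - f x * (2 * η x - 1)
  nlinarith [mul_nonneg h0 (by linarith : (0:ℝ) ≤ 1 - f x),
    mul_nonneg (by linarith : (0:ℝ) ≤ 1 - η x) (by linarith : (0:ℝ) ≤ 1 + f x)]

lemma optHingeRisk_eq (hπ : IsClassif π η) [IsProbabilityMeasure π] :
    optHingeRisk π = ∫ x, (1 - |2 * η x - 1|) ∂(π.map Prod.fst) := by
  unfold optHingeRisk
  rw [optHingeRiskE_eq hπ]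
  refine (integral_eq_lintegral_of_nonneg_ae (Filter.Eventually.of_forall fun x => ?_)
    (measurable_const.sub ((hπ.meas.const_mul 2).sub_const 1).abs).aestronglyMeasurable).symm
  rcases hπ.mem01 x with ⟨h0, h1⟩
  have habs : |2 * η x - 1| ≤ 1 := abs_le.2 ⟨by linarith, by linarith⟩
  show (0:ℝ) ≤ 1 - |2 * η x - 1|
  linarith

lemma hinge_pt (ηx v : ℝ) (hv : -1 ≤ v) (hv' : v ≤ 1) :
    (1 - v * (2 * ηx - 1)) - (1 - |2 * ηx - 1|) = |v - sgn (2 * ηx - 1)| * |2 * ηx - 1| := by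
  unfold sgn
  split <;> rename_i h
  · rw [abs_of_nonneg h, abs_of_nonpos (by linarith : v - 1 ≤ 0)]; ring
  · rw [abs_of_neg (not_le.1 h), abs_of_nonneg (by linarith : (0:ℝ) ≤ v - -1)]; ring

lemma misRiskE_eq (hπ : IsClassif π η) [IsProbabilityMeasure π] {g : X → ℝ}
    (hg : Measurable g) (hpm : ∀ x, g x = 1 ∨ g x = -1) :
    misRiskE π g = ∫⁻ x, ENNReal.ofReal
      (η x * (if g x = 1 then 0 else 1) + (1 - η x) * (if g x = -1 then 0 else 1))
      ∂(π.map Prod.fst) := by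
  have hsg : ∀ x, sgn (g x) = g x := fun x => by
    rcases hpm x with h | h <;> rw [h] <;> unfold sgn <;> norm_num
  have hSm : MeasurableSet {p : X × ℝ | p.2 ≠ sgn (g p.1)} :=
    (measurableSet_eq_fun measurable_snd
      ((measurable_sgn_comp hg).comp measurable_fst)).compl
  unfold misRiskE
  rw [← lintegral_indicator_one hSm, lintegral_split hπ (measurable_one.indicator hSm)]
  rw [← lintegral_add_left (by
    apply Measurable.mul hπ.meas.ennreal_ofReal
    apply Measurable.indicator measurable_one
    exact (measurable_id.prodMk measurable_const : Measurable fun x : X => (x, (1:ℝ))) hSm)]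
  refine lintegral_congr fun x => ?_
  rcases hπ.mem01 x with ⟨h0, h1⟩
  rcases hpm x with h | h
  · have e1 : ({p : X × ℝ | p.2 ≠ sgn (g p.1)}.indicator 1 (x, 1) : ℝ≥0∞) = 0 := by
      norm_num [Set.indicator_apply, hsg x, h, sgn]
    have e2 : ({p : X × ℝ | p.2 ≠ sgn (g p.1)}.indicator 1 (x, -1) : ℝ≥0∞) = 1 := by
      norm_num [Set.indicator_apply, hsg x, h, sgn]
    rw [e1, e2, h, mul_zero, mul_one, zero_add]
    norm_num
  · have e1 : ({p : X × ℝ | p.2 ≠ sgn (g p.1)}.indicator 1 (x, 1) : ℝ≥0∞) = 1 := by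
      norm_num [Set.indicator_apply, hsg x, h, sgn]
    have e2 : ({p : X × ℝ | p.2 ≠ sgn (g p.1)}.indicator 1 (x, -1) : ℝ≥0∞) = 0 := by
      norm_num [Set.indicator_apply, hsg x, h, sgn]
    rw [e1, e2, h, mul_zero, mul_one, add_zero]
    norm_num

lemma mis_pt (ηx u : ℝ) (hu : u = 1 ∨ u = -1) :
    (ηx * (if u = 1 then 0 else 1) + (1 - ηx) * (if u = -1 then 0 else 1))
      - (ηx * (if sgn (2 * ηx - 1) = 1 then 0 else 1)
          + (1 - ηx) * (if sgn (2 * ηx - 1) = -1 then 0 else 1))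
      = 1 / 2 * (|u - sgn (2 * ηx - 1)| * |2 * ηx - 1|) := by
  unfold sgn
  rcases hu with rfl | rfl <;> by_cases hs : 0 ≤ 2 * ηx - 1 <;>
    simp only [hs, if_true, if_false, ite_true, ite_false] <;> norm_num
  · rw [abs_of_neg (by linarith : 2 * ηx - 1 < 0)]; norm_num; ring
  · rw [abs_of_nonneg hs]; norm_num; ring

lemma hingeRisk_sub (hπ : IsClassif π η) [IsProbabilityMeasure π] {f : X → ℝ}
    (hf : Measurable f) (hb : ∀ x, f x ∈ Set.Icc (-1 : ℝ) 1) :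
    hingeRisk π f - optHingeRisk π
      = ∫ x, |f x - bayes η x| * |2 * η x - 1| ∂(π.map Prod.fst) := by
  haveI := map_fst_prob (π := π)
  have hη2 : Measurable fun x => 2 * η x - 1 := (hπ.meas.const_mul 2).sub_const 1
  have hint1 : Integrable (fun x => 1 - f x * (2 * η x - 1)) (π.map Prod.fst) := by
    refine integrable_bdd (measurable_const.sub (hf.mul hη2)) (C := 4) fun x => ?_
    rcases hb x with ⟨hl, hr⟩
    rcases hπ.mem01 x with ⟨h0, h1⟩
    rw [abs_le]; constructor <;> nlinarith
  have hint2 : Integrable (fun x => 1 - |2 * η x - 1|) (π.map Prod.fst) := by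
    refine integrable_bdd (measurable_const.sub hη2.abs) (C := 4) fun x => ?_
    rcases hπ.mem01 x with ⟨h0, h1⟩
    have habs : |2 * η x - 1| ≤ 1 := abs_le.2 ⟨by linarith, by linarith⟩
    rw [abs_le]; constructor <;> linarith [abs_nonneg (2 * η x - 1)]
  rw [hingeRisk_eq hπ hf hb, optHingeRisk_eq hπ, ← integral_sub hint1 hint2]
  refine integral_congr_ae (Filter.Eventually.of_forall fun x => ?_)
  exact hinge_pt (η x) (f x) (hb x).1 (hb x).2

lemma misRisk_eq (hπ : IsClassif π η) [IsProbabilityMeasure π] {g : X → ℝ}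
    (hg : Measurable g) (hpm : ∀ x, g x = 1 ∨ g x = -1) :
    misRisk π g = ∫ x, (η x * (if g x = 1 then 0 else 1)
      + (1 - η x) * (if g x = -1 then 0 else 1)) ∂(π.map Prod.fst) := by
  unfold misRisk
  rw [misRiskE_eq hπ hg hpm]
  have hmeas : Measurable fun x => η x * (if g x = 1 then 0 else 1)
      + (1 - η x) * (if g x = -1 then 0 else 1) := by
    refine Measurable.add (hπ.meas.mul ?_) ((measurable_const.sub hπ.meas).mul ?_)
    · exact Measurable.ite (measurableSet_eq_fun hg measurable_const)
        measurable_const measurable_const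
    · exact Measurable.ite (measurableSet_eq_fun hg measurable_const)
        measurable_const measurable_const
  refine (integral_eq_lintegral_of_nonneg_ae (Filter.Eventually.of_forall fun x => ?_)
    hmeas.aestronglyMeasurable).symm
  rcases hπ.mem01 x with ⟨h0, h1⟩
  show (0:ℝ) ≤ _
  split_ifs <;> nlinarith

lemma misRisk_bdd (ηx a b : ℝ) (h0 : 0 ≤ ηx) (h1 : ηx ≤ 1) (ha : a = 0 ∨ a = 1)
    (hb : b = 0 ∨ b = 1) : |ηx * a + (1 - ηx) * b| ≤ 1 := by
  rcases ha with rfl | rfl <;> rcases hb with rfl | rfl <;> rw [abs_le] <;>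
    constructor <;> nlinarith

lemma misRisk_sub (hπ : IsClassif π η) [IsProbabilityMeasure π] {g : X → ℝ}
    (hg : Measurable g) (hpm : ∀ x, g x = 1 ∨ g x = -1) :
    misRisk π g - misRisk π (bayes η)
      = 1 / 2 * ∫ x, |g x - bayes η x| * |2 * η x - 1| ∂(π.map Prod.fst) := by
  haveI := map_fst_prob (π := π)
  have hmeasg : Measurable fun x => η x * (if g x = 1 then 0 else 1)
      + (1 - η x) * (if g x = -1 then 0 else 1) := by
    refine Measurable.add (hπ.meas.mul ?_) ((measurable_const.sub hπ.meas).mul ?_) <;>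
      exact Measurable.ite (measurableSet_eq_fun hg measurable_const)
        measurable_const measurable_const
  have hmeasb : Measurable fun x => η x * (if bayes η x = 1 then 0 else 1)
      + (1 - η x) * (if bayes η x = -1 then 0 else 1) := by
    refine Measurable.add (hπ.meas.mul ?_) ((measurable_const.sub hπ.meas).mul ?_) <;>
      exact Measurable.ite (measurableSet_eq_fun (measurable_bayes hπ.meas) measurable_const)
        measurable_const measurable_const
  have hint1 : Integrable (fun x => η x * (if g x = 1 then 0 else 1)
      + (1 - η x) * (if g x = -1 then 0 else 1)) (π.map Prod.fst) := by
    refine integrable_bdd hmeasg (C := 1) fun x => ?_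
    rcases hπ.mem01 x with ⟨h0, h1⟩
    refine misRisk_bdd (η x) _ _ h0 h1 ?_ ?_ <;> split_ifs <;> simp
  have hint2 : Integrable (fun x => η x * (if bayes η x = 1 then 0 else 1)
      + (1 - η x) * (if bayes η x = -1 then 0 else 1)) (π.map Prod.fst) := by
    refine integrable_bdd hmeasb (C := 1) fun x => ?_
    rcases hπ.mem01 x with ⟨h0, h1⟩
    refine misRisk_bdd (η x) _ _ h0 h1 ?_ ?_ <;> split_ifs <;> simp
  rw [misRisk_eq hπ hg hpm, misRisk_eq hπ (measurable_bayes hπ.meas) (bayes_pm η),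
    ← integral_sub hint1 hint2, ← integral_const_mul]
  refine integral_congr_ae (Filter.Eventually.of_forall fun x => ?_)
  exact mis_pt (η x) (g x) (hpm x)

lemma key_lemma {μ : Measure X} [IsProbabilityMeasure μ] {m : X → ℝ}
    (hm : Measurable m) (hm0 : ∀ x, 0 ≤ m x) (hm1 : ∀ x, m x ≤ 1)
    {κ c₀ : ℝ} (hκ : 1 ≤ κ) (hc₀ : 0 < c₀)
    (hyp : ∀ B : Set X, MeasurableSet B →
      2 * (μ B).toReal ≤ c₀ * (∫ x in B, m x ∂μ) ^ (1 / κ)) :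
    ∃ c > 0, ∀ Z : X → ℝ, Measurable Z → (∀ x, 0 ≤ Z x) → (∀ x, Z x ≤ 2) →
      ∫ x, Z x ∂μ ≤ c * (∫ x, m x * Z x ∂μ) ^ (1 / κ) := by
  have hκ0 : (0:ℝ) < κ := by linarith
  have hr0 : (0:ℝ) < 1 / κ := by positivity
  have hmint : Integrable m μ :=
    integrable_bdd hm (C := 1) fun x => abs_le.2 ⟨by linarith [hm0 x], hm1 x⟩
  -- the set where m vanishes is null
  have hμ0 : μ {x | m x = 0} = 0 := by
    have hB : MeasurableSet {x | m x = 0} := hm (measurableSet_singleton 0)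
    have hI : ∫ x in {x | m x = 0}, m x ∂μ = 0 := by
      rw [show (∫ x in {x | m x = 0}, m x ∂μ) = ∫ _ in {x | m x = 0}, (0:ℝ) ∂μ from
        setIntegral_congr_fun hB fun x hx => hx]
      simp
    have h2 := hyp _ hB
    rw [hI, Real.zero_rpow (ne_of_gt hr0), mul_zero] at h2
    have h3 : (μ {x | m x = 0}).toReal = 0 :=
      le_antisymm (by linarith) ENNReal.toReal_nonneg
    exact ((ENNReal.toReal_eq_zero_iff _).1 h3).resolve_right (measure_ne_top μ _)
  have hμae : ∀ᵐ x ∂μ, m x ≠ 0 := by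
    rw [ae_iff]
    simpa [not_not] using hμ0
  have hzero : ∀ Z : X → ℝ, Measurable Z → (∀ x, 0 ≤ Z x) → (∀ x, Z x ≤ 2) →
      ∫ x, m x * Z x ∂μ = 0 → ∫ x, Z x ∂μ = 0 := by
    intro Z hZ h0 h2 ha
    have hZint : Integrable Z μ :=
      integrable_bdd hZ (C := 2) fun x => abs_le.2 ⟨by linarith [h0 x], h2 x⟩
    have hmZint : Integrable (fun x => m x * Z x) μ := by
      refine integrable_bdd (hm.mul hZ) (C := 2) fun x => ?_
      rw [abs_mul]
      calc |m x| * |Z x| ≤ 1 * 2 := by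
            refine mul_le_mul ?_ ?_ (abs_nonneg _) (by norm_num)
            · exact abs_le.2 ⟨by linarith [hm0 x], hm1 x⟩
            · exact abs_le.2 ⟨by linarith [h0 x], h2 x⟩
        _ = 2 := by norm_num
    have h' : (fun x => m x * Z x) =ᵐ[μ] 0 :=
      (integral_eq_zero_iff_of_nonneg (fun x => mul_nonneg (hm0 x) (h0 x)) hmZint).1 ha
    have hZ0 : Z =ᵐ[μ] 0 := by
      filter_upwards [h', hμae] with x hx hmx
      rcases mul_eq_zero.1 hx with h | h
      · exact absurd h hmx
      · exact h
    rw [integral_congr_ae hZ0]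
    simp
  rcases eq_or_lt_of_le hκ with rfl | hκ1
  · -- κ = 1 : hard margin
    refine ⟨c₀, hc₀, ?_⟩
    intro Z hZ h0 h2
    have hZint : Integrable Z μ :=
      integrable_bdd hZ (C := 2) fun x => abs_le.2 ⟨by linarith [h0 x], h2 x⟩
    have hmZint : Integrable (fun x => m x * Z x) μ := by
      refine integrable_bdd (hm.mul hZ) (C := 2) fun x => ?_
      rw [abs_mul]
      calc |m x| * |Z x| ≤ 1 * 2 := by
            refine mul_le_mul ?_ ?_ (abs_nonneg _) (by norm_num)
            · exact abs_le.2 ⟨by linarith [hm0 x], hm1 x⟩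
            · exact abs_le.2 ⟨by linarith [h0 x], h2 x⟩
        _ = 2 := by norm_num
    have hone : (1:ℝ) / 1 = 1 := by norm_num
    rw [hone, Real.rpow_one]
    -- the set {m ≤ 1/c₀} is null
    have hB : MeasurableSet {x | m x ≤ 1 / c₀} := hm measurableSet_Iic
    have hIB : ∫ x in {x | m x ≤ 1 / c₀}, m x ∂μ
        ≤ 1 / c₀ * (μ {x | m x ≤ 1 / c₀}).toReal := by
      calc ∫ x in {x | m x ≤ 1 / c₀}, m x ∂μ
          ≤ ∫ _ in {x | m x ≤ 1 / c₀}, (1 / c₀) ∂μ :=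
            setIntegral_mono_on hmint.integrableOn
              (integrable_const _).integrableOn hB (fun x hx => hx)
        _ = (μ {x | m x ≤ 1 / c₀}).toReal * (1 / c₀) := by
            rw [setIntegral_const]; rfl
        _ = 1 / c₀ * (μ {x | m x ≤ 1 / c₀}).toReal := mul_comm _ _
    have hhyp := hyp _ hB
    rw [hone, Real.rpow_one] at hhyp
    have hp0 : (0:ℝ) ≤ (μ {x | m x ≤ 1 / c₀}).toReal := ENNReal.toReal_nonneg
    have hple : 2 * (μ {x | m x ≤ 1 / c₀}).toReal
        ≤ c₀ * (1 / c₀ * (μ {x | m x ≤ 1 / c₀}).toReal) :=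
      hhyp.trans (mul_le_mul_of_nonneg_left hIB hc₀.le)
    have hc₀ne : c₀ ≠ 0 := ne_of_gt hc₀
    rw [← mul_assoc, mul_one_div_cancel hc₀ne, one_mul] at hple
    have hpz : (μ {x | m x ≤ 1 / c₀}).toReal = 0 := le_antisymm (by linarith) hp0
    have hBnull : μ {x | m x ≤ 1 / c₀} = 0 :=
      ((ENNReal.toReal_eq_zero_iff _).1 hpz).resolve_right (measure_ne_top μ _)
    have hae : ∀ᵐ x ∂μ, 1 / c₀ < m x := by
      rw [ae_iff]
      simpa [not_lt] using hBnull
    have hptw : ∀ᵐ x ∂μ, Z x ≤ c₀ * (m x * Z x) := by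
      filter_upwards [hae] with x hx
      have h1c : 1 ≤ c₀ * m x := by
        rw [div_lt_iff₀ hc₀] at hx
        nlinarith
      nlinarith [h0 x]
    calc ∫ x, Z x ∂μ ≤ ∫ x, c₀ * (m x * Z x) ∂μ :=
          integral_mono_ae hZint (hmZint.const_mul c₀) hptw
      _ = c₀ * ∫ x, m x * Z x ∂μ := integral_const_mul _ _
  · -- κ > 1
    have hκ1' : (0:ℝ) < κ - 1 := by linarith
    set K : ℝ := (c₀ / 2) ^ (κ / (κ - 1)) with hKdef
    have hK0 : 0 < K := Real.rpow_pos_of_pos (by positivity) _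
    have stepA : ∀ t : ℝ, 0 < t →
        (μ {x | m x ≤ t}).toReal ≤ K * t ^ (1 / (κ - 1)) := by
      intro t ht
      have hB : MeasurableSet {x | m x ≤ t} := hm measurableSet_Iic
      set p : ℝ := (μ {x | m x ≤ t}).toReal with hpdef
      have hp0 : 0 ≤ p := ENNReal.toReal_nonneg
      have hIB : ∫ x in {x | m x ≤ t}, m x ∂μ ≤ t * p := by
        calc ∫ x in {x | m x ≤ t}, m x ∂μ
            ≤ ∫ _ in {x | m x ≤ t}, t ∂μ :=
              setIntegral_mono_on hmint.integrableOn
                (integrable_const _).integrableOn hB (fun x hx => hx)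
          _ = p * t := by rw [setIntegral_const]; rfl
          _ = t * p := mul_comm _ _
      have hIB0 : 0 ≤ ∫ x in {x | m x ≤ t}, m x ∂μ :=
        setIntegral_nonneg hB (fun x _ => hm0 x)
      have h2 : 2 * p ≤ c₀ * (t * p) ^ (1 / κ) :=
        (hyp _ hB).trans (mul_le_mul_of_nonneg_left
          (Real.rpow_le_rpow hIB0 hIB (by positivity)) hc₀.le)
      rcases eq_or_lt_of_le hp0 with hp' | hp'
      · rw [← hp']; positivity
      · have htp : (t * p) ^ (1 / κ : ℝ) = t ^ (1 / κ : ℝ) * p ^ (1 / κ : ℝ) :=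
          Real.mul_rpow ht.le hp0
        rw [htp] at h2
        have hppow : (0:ℝ) < p ^ (1 / κ : ℝ) := Real.rpow_pos_of_pos hp' _
        have h3 : p ^ (1 - 1 / κ : ℝ) ≤ c₀ / 2 * t ^ (1 / κ : ℝ) := by
          rw [Real.rpow_sub hp', Real.rpow_one, div_le_iff₀ hppow]
          nlinarith
        have h4 := Real.rpow_le_rpow (Real.rpow_nonneg hp0 _) h3
          (le_of_lt (by positivity : (0:ℝ) < κ / (κ - 1)))
        rw [← Real.rpow_mul hp0] at h4
        have he1 : (1 - 1 / κ) * (κ / (κ - 1)) = 1 := by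
          field_simp
        rw [he1, Real.rpow_one] at h4
        have he2 : (c₀ / 2 * t ^ (1 / κ : ℝ)) ^ (κ / (κ - 1) : ℝ)
            = K * t ^ (1 / (κ - 1) : ℝ) := by
          rw [Real.mul_rpow (by positivity) (Real.rpow_nonneg ht.le _),
            ← Real.rpow_mul ht.le]
          congr 2
          field_simp
        rw [he2] at h4
        exact h4
    refine ⟨2 * K + 1, by positivity, ?_⟩
    intro Z hZ h0 h2
    have hZint : Integrable Z μ :=
      integrable_bdd hZ (C := 2) fun x => abs_le.2 ⟨by linarith [h0 x], h2 x⟩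
    have hmZint : Integrable (fun x => m x * Z x) μ := by
      refine integrable_bdd (hm.mul hZ) (C := 2) fun x => ?_
      rw [abs_mul]
      calc |m x| * |Z x| ≤ 1 * 2 := by
            refine mul_le_mul ?_ ?_ (abs_nonneg _) (by norm_num)
            · exact abs_le.2 ⟨by linarith [hm0 x], hm1 x⟩
            · exact abs_le.2 ⟨by linarith [h0 x], h2 x⟩
        _ = 2 := by norm_num
    set a : ℝ := ∫ x, m x * Z x ∂μ with hadef
    have ha0 : 0 ≤ a := integral_nonneg fun x => mul_nonneg (hm0 x) (h0 x)
    rcases eq_or_lt_of_le ha0 with haz | hap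
    · rw [hzero Z hZ h0 h2 haz.symm, ← haz, Real.zero_rpow (ne_of_gt hr0), mul_zero]
    · set t : ℝ := a ^ ((κ - 1) / κ) with htdef
      have ht : 0 < t := Real.rpow_pos_of_pos hap _
      have htA : t ^ (1 / (κ - 1) : ℝ) = a ^ (1 / κ : ℝ) := by
        rw [htdef, ← Real.rpow_mul hap.le]
        congr 1
        field_simp
      have htB : t⁻¹ * a = a ^ (1 / κ : ℝ) := by
        calc t⁻¹ * a = a ^ (-((κ - 1) / κ) : ℝ) * a ^ (1:ℝ) := by
              rw [htdef, ← Real.rpow_neg hap.le, Real.rpow_one]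
          _ = a ^ (-((κ - 1) / κ) + 1 : ℝ) := (Real.rpow_add hap _ _).symm
          _ = a ^ (1 / κ : ℝ) := by congr 1; field_simp; ring
      have hB : MeasurableSet {x | m x ≤ t} := hm measurableSet_Iic
      have hPA : (μ {x | m x ≤ t}).toReal ≤ K * a ^ (1 / κ : ℝ) := by
        rw [← htA]; exact stepA t ht
      have hsplit : ∫ x, Z x ∂μ
          = ∫ x in {x | m x ≤ t}, Z x ∂μ + ∫ x in {x | m x ≤ t}ᶜ, Z x ∂μ :=
        (integral_add_compl hB hZint).symm
      have hb1 : ∫ x in {x | m x ≤ t}, Z x ∂μ ≤ 2 * (μ {x | m x ≤ t}).toReal := by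
        calc ∫ x in {x | m x ≤ t}, Z x ∂μ
            ≤ ∫ _ in {x | m x ≤ t}, (2:ℝ) ∂μ :=
              setIntegral_mono_on hZint.integrableOn
                (integrable_const _).integrableOn hB (fun x _ => h2 x)
          _ = (μ {x | m x ≤ t}).toReal * 2 := by rw [setIntegral_const]; rfl
          _ = 2 * (μ {x | m x ≤ t}).toReal := mul_comm _ _
      have hb2 : ∫ x in {x | m x ≤ t}ᶜ, Z x ∂μ ≤ t⁻¹ * a := by
        have hptw : ∀ x ∈ {x | m x ≤ t}ᶜ, Z x ≤ t⁻¹ * (m x * Z x) := by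
          intro x hx
          have htm : t < m x := not_le.1 hx
          have h1 : t * Z x ≤ m x * Z x := mul_le_mul_of_nonneg_right htm.le (h0 x)
          calc Z x = t⁻¹ * (t * Z x) := by field_simp
            _ ≤ t⁻¹ * (m x * Z x) := mul_le_mul_of_nonneg_left h1 (inv_nonneg.2 ht.le)
        calc ∫ x in {x | m x ≤ t}ᶜ, Z x ∂μ
            ≤ ∫ x in {x | m x ≤ t}ᶜ, t⁻¹ * (m x * Z x) ∂μ :=
              setIntegral_mono_on hZint.integrableOn
                ((hmZint.const_mul _).integrableOn) hB.compl hptw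
          _ = t⁻¹ * ∫ x in {x | m x ≤ t}ᶜ, m x * Z x ∂μ := integral_const_mul _ _
          _ ≤ t⁻¹ * a := by
              refine mul_le_mul_of_nonneg_left ?_ (inv_nonneg.2 ht.le)
              exact setIntegral_le_integral hmZint
                (Filter.Eventually.of_forall fun x => mul_nonneg (hm0 x) (h0 x))
      have hfinal : ∫ x, Z x ∂μ ≤ 2 * (K * a ^ (1 / κ : ℝ)) + a ^ (1 / κ : ℝ) := by
        rw [hsplit]
        have := htB
        linarith [hb1, hb2, hPA, mul_le_mul_of_nonneg_left hPA (by norm_num : (0:ℝ) ≤ 2)]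
      calc ∫ x, Z x ∂μ ≤ 2 * (K * a ^ (1 / κ : ℝ)) + a ^ (1 / κ : ℝ) := hfinal
        _ = (2 * K + 1) * a ^ (1 / κ : ℝ) := by ring

end Prop1Aux

/-- Proposition 1: MA(κ) (for some c₀ > 0) is equivalent to MAH(κ)
(for some c > 0). -/
theorem MA_iff_MAH
    (π : Measure (X × ℝ)) [IsProbabilityMeasure π] (η : X → ℝ)
    (hπ : IsClassif π η) (κ : ℝ) (hκ : 1 ≤ κ) :
    (∃ c₀ > 0, MA π η κ c₀) ↔ (∃ c > 0, MAH π η κ c) := by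
  haveI := map_fst_prob (π := π)
  have hF : Measurable (bayes η) := measurable_bayes hπ.meas
  have hm : Measurable fun x => |2 * η x - 1| := ((hπ.meas.const_mul 2).sub_const 1).abs
  constructor
  · rintro ⟨c₀, hc₀, hMA⟩
    have hyp : ∀ B : Set X, MeasurableSet B →
        2 * ((π.map Prod.fst) B).toReal
          ≤ c₀ * (∫ x in B, |2 * η x - 1| ∂(π.map Prod.fst)) ^ (1 / κ) := by
      intro B hB
      classical
      set g : X → ℝ := B.piecewise (fun x => -bayes η x) (bayes η) with hgdef
      have hgm : Measurable g := Measurable.piecewise hB hF.neg hF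
      have hgpm : ∀ x, g x = 1 ∨ g x = -1 := by
        intro x
        by_cases hx : x ∈ B <;> rcases bayes_pm η x with h | h <;>
          simp [hgdef, Set.piecewise, hx, h]
      have habs : ∀ x, |g x - bayes η x| = B.indicator (fun _ => (2:ℝ)) x := by
        intro x
        by_cases hx : x ∈ B
        · rw [Set.indicator_of_mem hx, hgdef]
          simp only [Set.piecewise, hx, if_pos]
          rcases bayes_pm η x with h | h <;> rw [h] <;> norm_num
        · rw [Set.indicator_of_notMem hx, hgdef]
          simp only [Set.piecewise, hx, if_false]
          simp
      have hMAg := hMA g hgm hgpm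
      have hL : ∫ x, |g x - bayes η x| ∂(π.map Prod.fst)
          = 2 * ((π.map Prod.fst) B).toReal := by
        rw [integral_congr_ae (Filter.Eventually.of_forall habs),
          integral_indicator_const _ hB, smul_eq_mul]
        exact mul_comm _ _
      have hR : misRisk π g - misRisk π (bayes η)
          = ∫ x in B, |2 * η x - 1| ∂(π.map Prod.fst) := by
        rw [misRisk_sub hπ hgm hgpm]
        have hpt : ∀ x, |g x - bayes η x| * |2 * η x - 1|
            = B.indicator (fun y => 2 * |2 * η y - 1|) x := by
          intro x
          rw [habs x]
          by_cases hx : x ∈ B <;> simp [hx]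
        rw [integral_congr_ae (Filter.Eventually.of_forall hpt), integral_indicator hB,
          integral_const_mul]
        ring
      rw [hL, hR] at hMAg
      exact hMAg
    obtain ⟨c, hc, hkey⟩ := key_lemma hm (fun x => abs_nonneg _)
      (fun x => by
        rcases hπ.mem01 x with ⟨h0, h1⟩
        exact abs_le.2 ⟨by linarith, by linarith⟩) hκ hc₀ hyp
    refine ⟨c, hc, ?_⟩
    intro f hf hfb
    have hZbd : ∀ x, |f x - bayes η x| ≤ 2 := by
      intro x
      rcases hfb x with ⟨hl, hr⟩
      rcases bayes_pm η x with h | h <;> rw [h] <;>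
        exact abs_le.2 ⟨by linarith, by linarith⟩
    have hk := hkey (fun x => |f x - bayes η x|) (hf.sub hF).abs
      (fun x => abs_nonneg _) hZbd
    rw [hingeRisk_sub hπ hf hfb]
    have hcomm : ∫ x, |2 * η x - 1| * |f x - bayes η x| ∂(π.map Prod.fst)
        = ∫ x, |f x - bayes η x| * |2 * η x - 1| ∂(π.map Prod.fst) :=
      integral_congr_ae (Filter.Eventually.of_forall fun x => mul_comm _ _)
    rw [hcomm] at hk
    exact hk
  · rintro ⟨c, hc, hMAH⟩
    refine ⟨2 * c, by linarith, ?_⟩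
    intro g hg hgpm
    have hgb : ∀ x, g x ∈ Set.Icc (-1 : ℝ) 1 := fun x => by
      rcases hgpm x with h | h <;> rw [h] <;> constructor <;> norm_num
    have h1 := hMAH g hg hgb
    rw [hingeRisk_sub hπ hg hgb] at h1
    have h2 := misRisk_sub hπ hg hgpm
    have hI0 : 0 ≤ ∫ x, |g x - bayes η x| * |2 * η x - 1| ∂(π.map Prod.fst) :=
      integral_nonneg fun x => mul_nonneg (abs_nonneg _) (abs_nonneg _)
    have hb0 : 0 ≤ misRisk π g - misRisk π (bayes η) := by rw [h2]; linarith
    have hIb : ∫ x, |g x - bayes η x| * |2 * η x - 1| ∂(π.map Prod.fst)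
        = 2 * (misRisk π g - misRisk π (bayes η)) := by rw [h2]; ring
    calc ∫ x, |g x - bayes η x| ∂(π.map Prod.fst)
        ≤ c * (∫ x, |g x - bayes η x| * |2 * η x - 1| ∂(π.map Prod.fst)) ^ (1 / κ) := h1
      _ = c * (2 * (misRisk π g - misRisk π (bayes η))) ^ (1 / κ) := by rw [hIb]
      _ = c * (2 ^ (1 / κ) * (misRisk π g - misRisk π (bayes η)) ^ (1 / κ)) := by
          rw [Real.mul_rpow (by norm_num) hb0]
      _ ≤ c * (2 * (misRisk π g - misRisk π (bayes η)) ^ (1 / κ)) := by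
          refine mul_le_mul_of_nonneg_left ?_ hc.le
          refine mul_le_mul_of_nonneg_right ?_ (Real.rpow_nonneg hb0 _)
          calc (2:ℝ) ^ (1 / κ) ≤ 2 ^ (1:ℝ) :=
                Real.rpow_le_rpow_of_exponent_le (by norm_num)
                  (by rw [div_le_one (by linarith : (0:ℝ) < κ)]; exact hκ)
            _ = 2 := Real.rpow_one 2
      _ = 2 * c * (misRisk π g - misRisk π (bayes η)) ^ (1 / κ) := by ring

end AggClass
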